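/- For random transpositions on the complete graph with d ≥ 2 vertices and d letters: for every function f on permutations of d letters, Var_d(f) ≤ (1/(4d)) Σ_{x,y} ν_d[(∇_{x,y}f)^2], where ∇_{x,y}f(η) = f(η^{x,y}) − f(η) and η^{x,y} is η with letters at x and y swapped. -/

import Mathlib

open Finset

abbrev PP (n : ℕ) := Equiv.Perm (Fin n)

noncomputable def AA (n : ℕ) (f : PP n → ℝ) : PP n → ℝ :=
  fun η => ∑ x : Fin n, ∑ y : Fin n, (f η - f (η * Equiv.swap x y))

noncomputable def QQ (n : ℕ) (f : PP n → ℝ) : ℝ :=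
  ∑ x : Fin n, ∑ y : Fin n, ∑ η : PP n, (f (η * Equiv.swap x y) - f η)^2

lemma sum_mulRight {n : ℕ} (g : PP n) (h : PP n → ℝ) :
    ∑ η : PP n, h (η * g) = ∑ η : PP n, h η := by
  simpa using Equiv.sum_comp (Equiv.mulRight g) h

lemma sum_rot {α β γ : Type*} [Fintype α] [Fintype β] [Fintype γ] (F : α → β → γ → ℝ) :
    ∑ a : α, ∑ b : β, ∑ c : γ, F a b c = ∑ b : β, ∑ c : γ, ∑ a : α, F a b c := by
  rw [Finset.sum_comm]
  exact Finset.sum_congr rfl fun b _ => Finset.sum_comm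

lemma pair_sq {n : ℕ} (f : PP n → ℝ) (p : PP n) (hp : p * p = 1) :
    ∑ η : PP n, (f (η * p) - f η)^2 = 2 * ∑ η : PP n, f η * (f η - f (η * p)) := by
  have h1 : ∑ η : PP n, f (η * p)^2 = ∑ η : PP n, f η ^ 2 :=
    sum_mulRight p (fun η => f η ^ 2)
  have e1 : ∑ η : PP n, (f (η * p) - f η)^2
      = (∑ η : PP n, f (η * p)^2) + (∑ η : PP n, f η^2) - 2 * ∑ η : PP n, f η * f (η * p) := by
    have expand : ∀ η : PP n, (f (η * p) - f η)^2
        = (f (η * p)^2 + f η^2) - 2 * (f η * f (η * p)) := fun η => by ring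
    rw [Finset.sum_congr rfl (fun η _ => expand η), Finset.sum_sub_distrib,
      Finset.sum_add_distrib, ← Finset.mul_sum]
  have e2 : ∑ η : PP n, f η * (f η - f (η * p))
      = (∑ η : PP n, f η^2) - ∑ η : PP n, f η * f (η * p) := by
    rw [← Finset.sum_sub_distrib]
    exact Finset.sum_congr rfl fun η _ => by ring
  rw [e1, e2, h1]; ring

lemma QQ_eq_2A (n : ℕ) (f : PP n → ℝ) :
    QQ n f = 2 * ∑ η : PP n, f η * AA n f η := by
  unfold QQ AA
  have step1 : ∑ η : PP n, f η * (∑ x : Fin n, ∑ y : Fin n, (f η - f (η * Equiv.swap x y)))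
      = ∑ x : Fin n, ∑ y : Fin n, ∑ η : PP n, f η * (f η - f (η * Equiv.swap x y)) := by
    rw [← sum_rot (fun η x y => f η * (f η - f (η * Equiv.swap x y)))]
    exact Finset.sum_congr rfl fun η _ => by
      rw [Finset.mul_sum]
      exact Finset.sum_congr rfl fun x _ => by rw [Finset.mul_sum]
  rw [step1, Finset.mul_sum]
  refine Finset.sum_congr rfl fun x _ => ?_
  rw [Finset.mul_sum]
  refine Finset.sum_congr rfl fun y _ => ?_
  exact pair_sq f _ (Equiv.swap_mul_self x y)

lemma AA_sym {n : ℕ} (f g : PP n → ℝ) :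
    ∑ η : PP n, AA n f η * g η = ∑ η : PP n, f η * AA n g η := by
  unfold AA
  have l1 : ∑ η : PP n, (∑ x : Fin n, ∑ y : Fin n, (f η - f (η * Equiv.swap x y))) * g η
      = ∑ x : Fin n, ∑ y : Fin n, ∑ η : PP n, (f η - f (η * Equiv.swap x y)) * g η := by
    rw [← sum_rot (fun η x y => (f η - f (η * Equiv.swap x y)) * g η)]
    exact Finset.sum_congr rfl fun η _ => by
      rw [Finset.sum_mul]
      exact Finset.sum_congr rfl fun x _ => by rw [Finset.sum_mul]
  have l2 : ∑ η : PP n, f η * (∑ x : Fin n, ∑ y : Fin n, (g η - g (η * Equiv.swap x y)))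
      = ∑ x : Fin n, ∑ y : Fin n, ∑ η : PP n, f η * (g η - g (η * Equiv.swap x y)) := by
    rw [← sum_rot (fun η x y => f η * (g η - g (η * Equiv.swap x y)))]
    exact Finset.sum_congr rfl fun η _ => by
      rw [Finset.mul_sum]
      exact Finset.sum_congr rfl fun x _ => by rw [Finset.mul_sum]
  rw [l1, l2]
  refine Finset.sum_congr rfl fun x _ => Finset.sum_congr rfl fun y _ => ?_
  set w := Equiv.swap x y with hw
  have hww : w * w = 1 := Equiv.swap_mul_self x y
  have key : ∑ η : PP n, f (η * w) * g η = ∑ η : PP n, f η * g (η * w) := by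
    have := sum_mulRight w (fun η => f η * g (η * w))
    have h2 : ∀ η : PP n, f (η * w) * g (η * w * w) = f (η * w) * g η := by
      intro η; rw [mul_assoc, hww, mul_one]
    rw [← this]
    exact Finset.sum_congr rfl fun η _ => (h2 η).symm
  have el : ∑ η : PP n, (f η - f (η * w)) * g η
      = (∑ η : PP n, f η * g η) - ∑ η : PP n, f (η * w) * g η := by
    rw [← Finset.sum_sub_distrib]
    exact Finset.sum_congr rfl fun η _ => by ring
  have er : ∑ η : PP n, f η * (g η - g (η * w))
      = (∑ η : PP n, f η * g η) - ∑ η : PP n, f η * g (η * w) := by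
    rw [← Finset.sum_sub_distrib]
    exact Finset.sum_congr rfl fun η _ => by ring
  rw [el, er, key]

noncomputable def Bmap (n : ℕ) : (PP n → ℝ) →ₗ[ℝ] (PP n → ℝ) where
  toFun f := fun η => AA n f η + (2 * n / (Nat.factorial n)) * ∑ σ : PP n, f σ
  map_add' f g := by
    funext η
    have hA : AA n (f + g) η = AA n f η + AA n g η := by
      unfold AA
      rw [← Finset.sum_add_distrib]
      refine Finset.sum_congr rfl fun x _ => ?_
      rw [← Finset.sum_add_distrib]
      refine Finset.sum_congr rfl fun y _ => ?_
      simp only [Pi.add_apply]; ring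
    simp only [Pi.add_apply, hA, Finset.sum_add_distrib]
    ring
  map_smul' c f := by
    funext η
    have hA : AA n (c • f) η = c * AA n f η := by
      unfold AA
      rw [Finset.mul_sum]
      refine Finset.sum_congr rfl fun x _ => ?_
      rw [Finset.mul_sum]
      refine Finset.sum_congr rfl fun y _ => ?_
      simp only [Pi.smul_apply, smul_eq_mul]; ring
    simp only [Pi.smul_apply, smul_eq_mul, hA, RingHom.id_apply, ← Finset.mul_sum]
    ring

lemma Bmap_apply (n : ℕ) (f : PP n → ℝ) (η : PP n) :
    Bmap n f η = AA n f η + (2 * n / (Nat.factorial n)) * ∑ σ : PP n, f σ := rfl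

lemma Bmap_sym (n : ℕ) : ∀ f g : PP n → ℝ,
    ∑ η : PP n, Bmap n f η * g η = ∑ η : PP n, f η * Bmap n g η := by
  intro f g
  simp only [Bmap_apply]
  have l : ∀ (h k : PP n → ℝ) (K : ℝ),
      ∑ η : PP n, (h η + K) * k η = (∑ η : PP n, h η * k η) + K * ∑ η : PP n, k η := by
    intro h k K
    rw [Finset.mul_sum, ← Finset.sum_add_distrib]
    exact Finset.sum_congr rfl fun η _ => by ring
  have r : ∀ (h k : PP n → ℝ) (K : ℝ),
      ∑ η : PP n, k η * (h η + K) = (∑ η : PP n, k η * h η) + K * ∑ η : PP n, k η := by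
    intro h k K
    rw [Finset.mul_sum, ← Finset.sum_add_distrib]
    exact Finset.sum_congr rfl fun η _ => by ring
  rw [l (AA n f) g, r (AA n g) f, AA_sym f g]
  ring


lemma swap_succ {m : ℕ} (x y w : Fin m) :
    Equiv.swap x.succ y.succ w.succ = (Equiv.swap x y w).succ := by
  rcases eq_or_ne w x with rfl | hx
  · rw [Equiv.swap_apply_left, Equiv.swap_apply_left]
  · rcases eq_or_ne w y with rfl | hy
    · rw [Equiv.swap_apply_right, Equiv.swap_apply_right]
    · rw [Equiv.swap_apply_of_ne_of_ne (fun h => hx (Fin.succ_inj.mp h))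
        (fun h => hy (Fin.succ_inj.mp h)), Equiv.swap_apply_of_ne_of_ne hx hy]

lemma swap_succ_zero {m : ℕ} (x y : Fin m) :
    Equiv.swap x.succ y.succ (0 : Fin (m+1)) = 0 :=
  Equiv.swap_apply_of_ne_of_ne (Ne.symm (Fin.succ_ne_zero x)) (Ne.symm (Fin.succ_ne_zero y))

lemma EQV {m : ℕ} (a : Fin (m+1)) (σ : PP m) (x y : Fin m) :
    Equiv.Perm.decomposeFin.symm (a, σ * Equiv.swap x y)
      = Equiv.Perm.decomposeFin.symm (a, σ) * Equiv.swap x.succ y.succ := by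
  apply Equiv.ext
  intro z
  induction z using Fin.cases with
  | zero =>
      simp [Equiv.Perm.mul_apply, swap_succ_zero, Equiv.Perm.decomposeFin_symm_apply_zero]
  | succ w =>
      simp [Equiv.Perm.mul_apply, swap_succ, Equiv.Perm.decomposeFin_symm_apply_succ]

lemma sum_decompose {m : ℕ} (X : PP (m+1) → ℝ) :
    ∑ η : PP (m+1), X η
      = ∑ a : Fin (m+1), ∑ σ : PP m, X (Equiv.Perm.decomposeFin.symm (a, σ)) := by
  rw [← Equiv.sum_comp (Equiv.Perm.decomposeFin.symm) X, Fintype.sum_prod_type]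

lemma fiber0_sum {m : ℕ} (X : PP (m+1) → ℝ) (a : Fin (m+1)) :
    (∑ η : PP (m+1), if η 0 = a then X η else 0)
      = ∑ σ : PP m, X (Equiv.Perm.decomposeFin.symm (a, σ)) := by
  rw [sum_decompose (fun η => if η 0 = a then X η else 0)]
  simp only [Equiv.Perm.decomposeFin_symm_apply_zero]
  rw [Finset.sum_comm]
  refine Finset.sum_congr rfl fun σ _ => ?_
  rw [Finset.sum_ite_eq' univ a (fun a' => X (Equiv.Perm.decomposeFin.symm (a', σ)))]
  simp

lemma FI0 {m : ℕ}
    (ih : ∀ F : PP m → ℝ, (∑ σ : PP m, F σ) = 0 →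
      4*(m:ℝ)*(∑ σ : PP m, (F σ)^2) ≤ QQ m F)
    (ehat : PP (m+1) → ℝ)
    (h0 : ∀ a : Fin (m+1), (∑ η : PP (m+1), if η 0 = a then ehat η else 0) = 0) :
    4*(m:ℝ)*∑ η : PP (m+1), (ehat η)^2
      ≤ ∑ x : Fin m, ∑ y : Fin m, ∑ η : PP (m+1),
          (ehat (η * Equiv.swap x.succ y.succ) - ehat η)^2 := by
  set F : Fin (m+1) → PP m → ℝ :=
    fun a σ => ehat (Equiv.Perm.decomposeFin.symm (a, σ)) with hF
  have hmean : ∀ a, ∑ σ : PP m, F a σ = 0 := fun a => by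
    rw [← fiber0_sum ehat a]; exact h0 a
  have hLHS : ∑ η : PP (m+1), (ehat η)^2 = ∑ a, ∑ σ, (F a σ)^2 :=
    sum_decompose (fun η => (ehat η)^2)
  have hRHS : ∀ x y : Fin m,
      ∑ η : PP (m+1), (ehat (η * Equiv.swap x.succ y.succ) - ehat η)^2
        = ∑ a, ∑ σ : PP m, (F a (σ * Equiv.swap x y) - F a σ)^2 := by
    intro x y
    rw [sum_decompose (fun η => (ehat (η * Equiv.swap x.succ y.succ) - ehat η)^2)]
    refine Finset.sum_congr rfl fun a _ => Finset.sum_congr rfl fun σ _ => ?_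
    simp only [hF, EQV]
  calc 4*(m:ℝ)*∑ η : PP (m+1), (ehat η)^2
      = ∑ a, 4*(m:ℝ)*∑ σ, (F a σ)^2 := by rw [hLHS, Finset.mul_sum]
    _ ≤ ∑ a, QQ m (F a) := Finset.sum_le_sum fun a _ => ih (F a) (hmean a)
    _ = ∑ x : Fin m, ∑ y : Fin m, ∑ η : PP (m+1),
          (ehat (η * Equiv.swap x.succ y.succ) - ehat η)^2 := by
        unfold QQ
        rw [sum_rot (fun a x y => ∑ σ : PP m, (F a (σ * Equiv.swap x y) - F a σ)^2)]
        exact Finset.sum_congr rfl fun x _ =>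
          Finset.sum_congr rfl fun y _ => (hRHS x y).symm


lemma FR {N : ℕ} (e : PP N → ℝ) (p : PP N) (v a : Fin N) :
    (∑ η : PP N, if η v = a then e (η * p) else 0)
      = ∑ η : PP N, if η (p⁻¹ v) = a then e η else 0 := by
  have step : ∀ η : PP N,
      (if η v = a then e (η * p) else 0)
        = (fun σ : PP N => if σ (p⁻¹ v) = a then e σ else 0) (η * p) := by
    intro η
    simp only [Equiv.Perm.mul_apply, Equiv.Perm.inv_def, Equiv.apply_symm_apply]
  rw [Finset.sum_congr rfl (fun η _ => step η)]
  simpa using sum_mulRight p (fun σ : PP N => if σ (p⁻¹ v) = a then e σ else 0)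

lemma SW {m : ℕ} (h : Fin (m+1) → ℝ) (v : Fin (m+1)) :
    ∑ x : Fin (m+1), ∑ y : Fin (m+1), h (Equiv.swap x y v)
      = 2 * (∑ w, h w) + ((m:ℝ)^2 - 1) * h v := by
  have hcard : (univ.erase v).card = m := by
    simp [Finset.card_erase_of_mem, card_univ]
  have inner : ∀ x, x ≠ v →
      ∑ y : Fin (m+1), h (Equiv.swap x y v) = (m:ℝ) * h v + h x := by
    intro x hx
    rw [← Finset.sum_erase_add univ _ (mem_univ v)]
    have h1 : ∀ y ∈ univ.erase v, h (Equiv.swap x y v) = h v := by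
      intro y hy
      rw [Equiv.swap_apply_of_ne_of_ne (Ne.symm hx) (Ne.symm (Finset.ne_of_mem_erase hy))]
    rw [Finset.sum_congr rfl h1, Finset.sum_const, hcard, Equiv.swap_apply_right, nsmul_eq_mul]
  rw [← Finset.sum_erase_add univ _ (mem_univ v)]
  have h2 : ∀ x ∈ univ.erase v,
      (∑ y, h (Equiv.swap x y v)) = (m:ℝ) * h v + h x :=
    fun x hx => inner x (Finset.ne_of_mem_erase hx)
  rw [Finset.sum_congr rfl h2, Finset.sum_add_distrib, Finset.sum_const, hcard, nsmul_eq_mul]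
  have h3 : ∑ y, h (Equiv.swap v y v) = ∑ y, h y :=
    Finset.sum_congr rfl (fun y _ => by rw [Equiv.swap_apply_left])
  rw [h3]
  have h4 : ∑ x ∈ univ.erase v, h x = (∑ x, h x) - h v := by
    rw [← Finset.sum_erase_add univ h (mem_univ v)]; ring
  rw [h4]; ring

lemma sum_phi {m : ℕ} (v : Fin (m+1)) (h : Fin (m+1) → ℝ) :
    ∑ x : Fin m, h (Equiv.swap 0 v x.succ) = (∑ z, h z) - h v := by
  have e1 : ∑ z : Fin (m+1), h (Equiv.swap 0 v z) = ∑ z, h z :=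
    Equiv.sum_comp (Equiv.swap 0 v) h
  have e2 : ∑ z : Fin (m+1), h (Equiv.swap 0 v z)
      = h (Equiv.swap 0 v 0) + ∑ x : Fin m, h (Equiv.swap 0 v x.succ) :=
    Fin.sum_univ_succ (fun z => h (Equiv.swap 0 v z))
  rw [Equiv.swap_apply_left] at e2
  linarith [e1, e2]

lemma eig_lower (m : ℕ) (hm1 : 1 ≤ m)
    (ih : ∀ F : PP m → ℝ, (∑ σ : PP m, F σ) = 0 →
      4*(m:ℝ)*(∑ σ : PP m, (F σ)^2) ≤ QQ m F)
    (μ : ℝ) (e : PP (m+1) → ℝ) (hne : e ≠ 0)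
    (heq : Bmap (m+1) e = μ • e) :
    2*((m:ℝ)+1) ≤ μ := by
  have hpt : ∀ η : PP (m+1),
      AA (m+1) e η + (2*((m+1:ℕ):ℝ)/((Nat.factorial (m+1) : ℕ):ℝ)) * (∑ σ : PP (m+1), e σ)
        = μ * e η := by
    intro η
    have := congrFun heq η
    simpa [Bmap_apply] using this
  set Se := ∑ σ : PP (m+1), e σ with hSe
  have hAsum : ∑ η : PP (m+1), AA (m+1) e η = 0 := by
    unfold AA
    rw [sum_rot (fun η x y => e η - e (η * Equiv.swap x y))]
    refine Finset.sum_eq_zero fun x _ => Finset.sum_eq_zero fun y _ => ?_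
    rw [Finset.sum_sub_distrib, sum_mulRight (Equiv.swap x y) e, sub_self]
  have hfac : ((Nat.factorial (m+1) : ℕ):ℝ) ≠ 0 :=
    Nat.cast_ne_zero.mpr (Nat.factorial_ne_zero (m+1))
  have hsum_eq : 2*((m+1:ℕ):ℝ) * Se = μ * Se := by
    have h1 : ∑ η : PP (m+1),
        (AA (m+1) e η + (2*((m+1:ℕ):ℝ)/((Nat.factorial (m+1) : ℕ):ℝ)) * Se)
          = ∑ η : PP (m+1), μ * e η :=
      Finset.sum_congr rfl fun η _ => hpt η
    rw [Finset.sum_add_distrib, hAsum, Finset.sum_const, ← Finset.mul_sum, ← hSe,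
      zero_add, nsmul_eq_mul, card_univ] at h1
    rw [show (Fintype.card (PP (m+1)) : ℝ) = ((Nat.factorial (m+1) : ℕ):ℝ) by
      rw [Fintype.card_perm, Fintype.card_fin]] at h1
    have hc : ((Nat.factorial (m+1) : ℕ):ℝ)
        * (2*((m+1:ℕ):ℝ)/((Nat.factorial (m+1) : ℕ):ℝ) * Se)
        = 2*((m+1:ℕ):ℝ)*Se := by
      field_simp
    rw [hc] at h1
    exact h1
  by_cases hS0 : Se = 0
  swap
  · have : 2*((m+1:ℕ):ℝ) = μ := mul_right_cancel₀ hS0 hsum_eq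
    push_cast at this
    linarith
  · have hA : ∀ η, AA (m+1) e η = μ * e η := by
      intro η
      have := hpt η
      rw [hS0, mul_zero, add_zero] at this
      exact this
    set g : Fin (m+1) → Fin (m+1) → ℝ :=
      fun v a => ∑ η : PP (m+1), if η v = a then e η else 0 with hg
    have hgsum : ∀ a, ∑ v, g v a = 0 := by
      intro a
      rw [Finset.sum_comm]
      have hη : ∀ η : PP (m+1), (∑ v, if η v = a then e η else 0) = e η := by
        intro η
        calc ∑ v, (if η v = a then e η else 0)
            = ∑ v, (if v = η.symm a then e η else 0) := by
              simp only [Equiv.apply_eq_iff_eq_symm_apply]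
          _ = e η := by
              rw [Finset.sum_ite_eq' univ (η.symm a) (fun _ => e η)]
              simp
      rw [Finset.sum_congr rfl fun η _ => hη η]
      exact hS0
    have hfib : ∀ v a, μ * g v a = 2*((m:ℝ)+1) * g v a := by
      intro v a
      have hl : ∑ η : PP (m+1), (if η v = a then AA (m+1) e η else 0) = μ * g v a := by
        rw [Finset.sum_congr rfl fun η (_ : η ∈ univ) =>
          (by rw [hA] : (if η v = a then AA (m+1) e η else 0) = (if η v = a then μ * e η else 0))]
        rw [hg, Finset.mul_sum]
        refine Finset.sum_congr rfl fun η _ => ?_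
        split <;> simp
      have hl2 : ∑ η : PP (m+1), (if η v = a then AA (m+1) e η else 0)
          = (∑ x : Fin (m+1), ∑ y : Fin (m+1), g v a)
            - ∑ x : Fin (m+1), ∑ y : Fin (m+1), g (Equiv.swap x y v) a := by
        unfold AA
        have expand : ∀ η : PP (m+1),
            (if η v = a then (∑ x, ∑ y, (e η - e (η * Equiv.swap x y))) else 0)
              = ∑ x, ∑ y, (if η v = a then (e η - e (η * Equiv.swap x y)) else 0) := by
          intro η
          split
          · rfl
          · simp
        rw [Finset.sum_congr rfl fun η _ => expand η,
          sum_rot (fun η x y => if η v = a then (e η - e (η * Equiv.swap x y)) else 0),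
          ← Finset.sum_sub_distrib]
        refine Finset.sum_congr rfl fun x _ => ?_
        rw [← Finset.sum_sub_distrib]
        refine Finset.sum_congr rfl fun y _ => ?_
        have split_ite : ∀ η : PP (m+1),
            (if η v = a then (e η - e (η * Equiv.swap x y)) else 0)
              = (if η v = a then e η else 0) - (if η v = a then e (η * Equiv.swap x y) else 0) := by
          intro η; split <;> simp
        rw [Finset.sum_congr rfl fun η _ => split_ite η, Finset.sum_sub_distrib,
          FR e (Equiv.swap x y) v a, Equiv.swap_inv]
      have hSW := SW (fun w => g w a) v
      have hconst : (∑ _x : Fin (m+1), ∑ _y : Fin (m+1), g v a)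
          = ((m:ℝ)+1)^2 * g v a := by
        rw [Finset.sum_const, Finset.sum_const, card_univ, Fintype.card_fin,
          smul_smul, nsmul_eq_mul]
        push_cast
        ring
      rw [← hl, hl2, hconst, hSW, hgsum a]
      push_cast
      ring
    by_cases hgz : ∀ v a, g v a = 0
    swap
    · push_neg at hgz
      obtain ⟨v, a, hva⟩ := hgz
      have := hfib v a
      have h2 : μ = 2*((m:ℝ)+1) := mul_right_cancel₀ hva this
      linarith
    · -- case 2b : all one-coordinate marginals vanish
      have hP : 0 < ∑ η : PP (m+1), (e η)^2 := by
        obtain ⟨η0, hη0⟩ := Function.ne_iff.mp hne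
        refine Finset.sum_pos' (fun η _ => sq_nonneg _) ⟨η0, Finset.mem_univ η0, ?_⟩
        have h0 : e η0 ≠ 0 := by simpa using hη0
        positivity
      set P := ∑ η : PP (m+1), (e η)^2 with hPdef
      set T2 : Fin (m+1) → Fin (m+1) → ℝ :=
        fun x y => ∑ η : PP (m+1), (e (η * Equiv.swap x y) - e η)^2 with hT2
      have hT2vv : ∀ v, T2 v v = 0 := by
        intro v
        simp only [hT2]
        have hone : ∀ η : PP (m+1), η * Equiv.swap v v = η := by
          intro η
          rw [Equiv.swap_self]
          exact mul_one η
        simp [hone, Equiv.Perm.mul_refl]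
      have hQT : QQ (m+1) e = ∑ x : Fin (m+1), ∑ y : Fin (m+1), T2 x y := rfl
      have hFIv : ∀ v : Fin (m+1), 4*(m:ℝ)*P
          ≤ ∑ x : Fin m, ∑ y : Fin m,
              T2 (Equiv.swap 0 v x.succ) (Equiv.swap 0 v y.succ) := by
        intro v
        set s : PP (m+1) := Equiv.swap 0 v with hs
        have hss : s * s = 1 := Equiv.swap_mul_self _ _
        have hfib0 : ∀ a, (∑ η : PP (m+1), if η 0 = a then e (η * s) else 0) = 0 := by
          intro a
          rw [FR e s 0 a]
          have h1 : s⁻¹ = s := Equiv.swap_inv _ _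
          have h2 : s 0 = v := Equiv.swap_apply_left _ _
          rw [h1]
          simp only [h2]
          exact hgz v a
        have h1 := FI0 ih (fun η => e (η * s)) hfib0
        have hL : (∑ η : PP (m+1), (e (η * s))^2) = ∑ η : PP (m+1), (e η)^2 :=
          sum_mulRight s (fun η => (e η)^2)
        rw [hL] at h1
        refine le_trans h1 (le_of_eq ?_)
        refine Finset.sum_congr rfl fun x _ => Finset.sum_congr rfl fun y _ => ?_
        simp only [hT2]
        have hconj : s * Equiv.swap x.succ y.succ * s⁻¹
            = Equiv.swap (s x.succ) (s y.succ) := (Equiv.swap_apply_apply s _ _).symm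
        rw [Equiv.swap_inv] at hconj
        rw [← sum_mulRight s (fun σ : PP (m+1) =>
          (e (σ * Equiv.swap (s x.succ) (s y.succ)) - e σ)^2)]
        refine Finset.sum_congr rfl fun η _ => ?_
        have key : η * s * Equiv.swap (s x.succ) (s y.succ)
            = η * Equiv.swap x.succ y.succ * s := by
          rw [← hconj,
            show η * s * (s * Equiv.swap x.succ y.succ * s)
              = η * (s * (s * Equiv.swap x.succ y.succ * s)) from by rw [mul_assoc],
            show s * (s * Equiv.swap x.succ y.succ * s) = Equiv.swap x.succ y.succ * s from by
              rw [← mul_assoc, ← mul_assoc, hss, one_mul],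
            ← mul_assoc]
        rw [key]
      have hsum_v : ∀ v : Fin (m+1),
          ∑ x : Fin m, ∑ y : Fin m, T2 (Equiv.swap 0 v x.succ) (Equiv.swap 0 v y.succ)
            = (∑ x : Fin (m+1), ∑ y : Fin (m+1), T2 x y)
              - (∑ z : Fin (m+1), T2 v z) - (∑ x : Fin (m+1), T2 x v) + T2 v v := by
        intro v
        have inner1 : ∀ x' : Fin (m+1),
            ∑ y : Fin m, T2 x' (Equiv.swap 0 v y.succ) = (∑ z, T2 x' z) - T2 x' v :=
          fun x' => sum_phi v (fun z => T2 x' z)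
        calc ∑ x : Fin m, ∑ y : Fin m, T2 (Equiv.swap 0 v x.succ) (Equiv.swap 0 v y.succ)
            = ∑ x : Fin m, ((∑ z, T2 (Equiv.swap 0 v x.succ) z)
                - T2 (Equiv.swap 0 v x.succ) v) :=
              Finset.sum_congr rfl fun x _ => inner1 _
          _ = (∑ x : Fin m, (∑ z, T2 (Equiv.swap 0 v x.succ) z))
              - ∑ x : Fin m, T2 (Equiv.swap 0 v x.succ) v := Finset.sum_sub_distrib _ _
          _ = ((∑ x' : Fin (m+1), ∑ z, T2 x' z) - ∑ z, T2 v z)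
              - ((∑ x' : Fin (m+1), T2 x' v) - T2 v v) := by
              rw [sum_phi v (fun x' => ∑ z, T2 x' z), sum_phi v (fun x' => T2 x' v)]
          _ = (∑ x : Fin (m+1), ∑ y : Fin (m+1), T2 x y)
              - (∑ z : Fin (m+1), T2 v z) - (∑ x : Fin (m+1), T2 x v) + T2 v v := by
              ring
      have htot : (((m:ℝ)+1)) * (4*(m:ℝ)*P) ≤ ((m:ℝ) - 1) * QQ (m+1) e := by
        have step1 : (((m:ℝ)+1)) * (4*(m:ℝ)*P) = ∑ _v : Fin (m+1), 4*(m:ℝ)*P := by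
          rw [Finset.sum_const, card_univ, Fintype.card_fin, nsmul_eq_mul]
          push_cast
          ring
        rw [step1]
        have step2 : ∑ v : Fin (m+1), ((∑ x : Fin (m+1), ∑ y : Fin (m+1), T2 x y)
              - (∑ z : Fin (m+1), T2 v z) - (∑ x : Fin (m+1), T2 x v) + T2 v v)
            = ((m:ℝ) - 1) * QQ (m+1) e := by
          rw [Finset.sum_add_distrib, Finset.sum_sub_distrib, Finset.sum_sub_distrib,
            Finset.sum_const, card_univ, Fintype.card_fin, nsmul_eq_mul]
          have c1 : ∑ v : Fin (m+1), ∑ z : Fin (m+1), T2 v z = QQ (m+1) e := hQT.symm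
          have c2 : ∑ v : Fin (m+1), ∑ x : Fin (m+1), T2 x v = QQ (m+1) e := by
            rw [Finset.sum_comm]
            exact hQT.symm
          have c3 : ∑ v : Fin (m+1), T2 v v = 0 :=
            Finset.sum_eq_zero fun v _ => hT2vv v
          rw [c1, c2, c3, hQT]
          push_cast
          ring
        calc ∑ _v : Fin (m+1), 4*(m:ℝ)*P
            ≤ ∑ v : Fin (m+1), ∑ x : Fin m, ∑ y : Fin m,
                T2 (Equiv.swap 0 v x.succ) (Equiv.swap 0 v y.succ) :=
              Finset.sum_le_sum fun v _ => hFIv v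
          _ = ∑ v : Fin (m+1), ((∑ x : Fin (m+1), ∑ y : Fin (m+1), T2 x y)
              - (∑ z : Fin (m+1), T2 v z) - (∑ x : Fin (m+1), T2 x v) + T2 v v) :=
              Finset.sum_congr rfl fun v _ => hsum_v v
          _ = ((m:ℝ) - 1) * QQ (m+1) e := step2
      have hQμ : QQ (m+1) e = 2 * μ * P := by
        rw [QQ_eq_2A]
        have hAe : ∑ η : PP (m+1), e η * AA (m+1) e η = μ * P := by
          rw [hPdef, Finset.mul_sum]
          refine Finset.sum_congr rfl fun η _ => ?_
          rw [hA η]; ring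
        rw [hAe]; ring
      rw [hQμ] at htot
      by_contra hcon
      push_neg at hcon
      have hm1R : (1:ℝ) ≤ (m:ℝ) := by exact_mod_cast hm1
      nlinarith [htot, hP, hm1R, mul_pos hP (show (0:ℝ) < (m:ℝ)+1 by linarith),
        mul_le_mul_of_nonneg_left (le_of_lt hcon) (show (0:ℝ) ≤ 2*P*((m:ℝ)-1) by nlinarith)]




lemma quad_form_lower_bound {ι : Type*} [Fintype ι] (B : (ι → ℝ) →ₗ[ℝ] (ι → ℝ))
    (hsym : ∀ f g : ι → ℝ, ∑ i, B f i * g i = ∑ i, f i * B g i)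
    (c : ℝ)
    (heig : ∀ (μ : ℝ) (e : ι → ℝ), e ≠ 0 → B e = μ • e → c ≤ μ) :
    ∀ f : ι → ℝ, c * ∑ i, f i ^ 2 ≤ ∑ i, f i * B f i := by
  intro f
  let T : EuclideanSpace ℝ ι →ₗ[ℝ] EuclideanSpace ℝ ι :=
    { toFun := fun x => WithLp.toLp 2 (B x.ofLp)
      map_add' := by intro x y; simp
      map_smul' := by intro a x; simp }
  have hT : T.IsSymmetric := by
    intro x y
    simpa [PiLp.inner_apply, RCLike.inner_apply, T, mul_comm] using hsym x y
  have hn : Module.finrank ℝ (EuclideanSpace ℝ ι) = Fintype.card ι := finrank_euclideanSpace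
  set b := hT.eigenvectorBasis hn with hb
  set μ := hT.eigenvalues hn with hμ
  have happ : ∀ i, T (b i) = (μ i : ℝ) • b i := fun i => hT.apply_eigenvectorBasis hn i
  have hge : ∀ i, c ≤ μ i := by
    intro i
    refine heig (μ i) (b i) ?_ (by simpa [T] using congrArg WithLp.ofLp (happ i))
    intro h0
    have := b.orthonormal.1 i
    rw [show b i = (0 : EuclideanSpace ℝ ι) from by simpa using congrArg (WithLp.toLp 2) h0] at this
    simp at this
  have key : ∀ x : EuclideanSpace ℝ ι, c * (inner ℝ x x : ℝ) ≤ (inner ℝ x (T x) : ℝ) := by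
    intro x
    have h1 : (inner ℝ x (T x) : ℝ) = ∑ i, (inner ℝ x (b i) : ℝ) * inner ℝ (b i) (T x) :=
      (b.sum_inner_mul_inner x (T x)).symm
    have h2 : (inner ℝ x x : ℝ) = ∑ i, (inner ℝ x (b i) : ℝ) * inner ℝ (b i) x :=
      (b.sum_inner_mul_inner x x).symm
    have h3 : ∀ i, (inner ℝ (b i) (T x) : ℝ) = μ i * inner ℝ (b i) x := by
      intro i
      have := hT (b i) x
      rw [happ i] at this
      rw [← this, inner_smul_left]
      simp
    rw [h1, h2, Finset.mul_sum]
    apply Finset.sum_le_sum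
    intro i _
    rw [h3 i, real_inner_comm (b i) x]
    nlinarith [mul_le_mul_of_nonneg_right (hge i) (sq_nonneg (inner ℝ (b i) x : ℝ)), sq_nonneg (inner ℝ (b i) x : ℝ)]
  have := key (WithLp.toLp 2 f)
  rw [PiLp.inner_apply, PiLp.inner_apply] at this
  simpa [PiLp.inner_apply, RCLike.inner_apply, T, pow_two, mul_comm] using this


theorem gap : ∀ (n : ℕ) (f : PP n → ℝ), (∑ η : PP n, f η) = 0 →
    4*(n:ℝ)*(∑ η : PP n, (f η)^2) ≤ QQ n f := by
  intro n
  induction n with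
  | zero =>
      intro f _
      have h0 : (0:ℝ) ≤ QQ 0 f :=
        Finset.sum_nonneg fun x _ => Finset.sum_nonneg fun y _ =>
          Finset.sum_nonneg fun η _ => sq_nonneg _
      simpa using h0
  | succ m ih =>
      intro f hf
      rcases Nat.eq_zero_or_pos m with hm | hm
      · subst hm
        have huniq : ∀ η : PP 1, η = 1 := fun η => Equiv.ext fun z => Subsingleton.elim _ _
        have hc1 : Fintype.card (PP 1) = 1 := by
          rw [Fintype.card_perm, Fintype.card_fin, Nat.factorial_one]
        have hf1 : f 1 = 0 := by
          have h1 : ∑ η : PP 1, f η = ∑ _η : PP 1, f 1 :=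
            Finset.sum_congr rfl fun η _ => by rw [huniq η]
          rw [h1, Finset.sum_const, card_univ, hc1, one_smul] at hf
          exact hf
        have hsq : ∑ η : PP 1, (f η)^2 = 0 :=
          Finset.sum_eq_zero fun η _ => by rw [huniq η, hf1]; ring
        have h0 : (0:ℝ) ≤ QQ 1 f :=
          Finset.sum_nonneg fun x _ => Finset.sum_nonneg fun y _ =>
            Finset.sum_nonneg fun η _ => sq_nonneg _
        rw [hsq]
        simpa using h0
      · have heig : ∀ (μ : ℝ) (e : PP (m+1) → ℝ), e ≠ 0 → Bmap (m+1) e = μ • e →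
            2*((m:ℝ)+1) ≤ μ := fun μ e hne heq => eig_lower m hm ih μ e hne heq
        have hq := quad_form_lower_bound (Bmap (m+1)) (Bmap_sym (m+1)) (2*((m:ℝ)+1)) heig f
        have hBf : ∑ η : PP (m+1), f η * Bmap (m+1) f η
            = ∑ η : PP (m+1), f η * AA (m+1) f η := by
          refine Finset.sum_congr rfl fun η _ => ?_
          rw [Bmap_apply, hf, mul_zero, add_zero]
        rw [hBf] at hq
        have hQQ := QQ_eq_2A (m+1) f
        push_cast
        linarith [hq, hQQ]

/-- Expectation of `f` under the uniform measure `ν_d` on permutations of `d` letters. -/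
noncomputable def pexp (d : ℕ) (f : Equiv.Perm (Fin d) → ℝ) : ℝ :=
  (∑ η : Equiv.Perm (Fin d), f η) / (Nat.factorial d : ℝ)

/-- Poincaré inequality for random transpositions on the complete graph
with `d ≥ 2` vertices and `d` letters:
`Var_d(f) ≤ (1/(4d)) Σ_{x,y} ν_d[(∇_{x,y} f)²]`, where `∇_{x,y} f(η) = f(η^{x,y}) − f(η)`
and `η^{x,y}` is `η` with the letters at vertices `x` and `y` swapped. -/
theorem randomTranspositions_poincare (d : ℕ) (hd : 2 ≤ d) (f : Equiv.Perm (Fin d) → ℝ) :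
    pexp d (fun η => (f η) ^ 2) - (pexp d f) ^ 2 ≤
      (1 / (4 * (d : ℝ))) * ∑ x : Fin d, ∑ y : Fin d,
        pexp d (fun η => (f ((Equiv.swap x y).trans η) - f η) ^ 2) := by
  have hfacpos : (0:ℝ) < (Nat.factorial d : ℝ) := by exact_mod_cast Nat.factorial_pos d
  have hdpos : (0:ℝ) < (d:ℝ) := by
    have : 0 < d := lt_of_lt_of_le Nat.zero_lt_two hd
    exact_mod_cast this
  set M := pexp d f with hM
  set f0 : PP d → ℝ := fun η => f η - M with hf0def
  have hcard : (Fintype.card (PP d) : ℝ) = (Nat.factorial d : ℝ) := by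
    rw [Fintype.card_perm, Fintype.card_fin]
  have hSf : ∑ η : PP d, f η = (Nat.factorial d : ℝ) * M := by
    rw [hM]
    unfold pexp
    field_simp
  have hf0 : ∑ η : PP d, f0 η = 0 := by
    simp only [hf0def]
    rw [Finset.sum_sub_distrib, Finset.sum_const, card_univ, nsmul_eq_mul, hcard, hSf]
    ring
  have hgap := gap d f0 hf0
  have hQ : QQ d f0 = QQ d f := by
    unfold QQ
    refine Finset.sum_congr rfl fun x _ => Finset.sum_congr rfl fun y _ =>
      Finset.sum_congr rfl fun η _ => ?_
    simp only [hf0def]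
    ring
  rw [hQ] at hgap
  have hsum0 : ∑ η : PP d, (f0 η)^2
      = (∑ η : PP d, (f η)^2) - (Nat.factorial d : ℝ) * M^2 := by
    simp only [hf0def]
    have expand : ∀ η : PP d, (f η - M)^2 = ((f η)^2 + M^2) - 2*M*(f η) := fun η => by ring
    rw [Finset.sum_congr rfl fun η _ => expand η, Finset.sum_sub_distrib,
      Finset.sum_add_distrib, ← Finset.mul_sum, hSf, Finset.sum_const, card_univ,
      nsmul_eq_mul, hcard]
    ring
  have hLHSgoal : pexp d (fun η => (f η)^2) - M^2
      = (∑ η : PP d, (f0 η)^2) / (Nat.factorial d : ℝ) := by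
    unfold pexp
    rw [hsum0]
    field_simp
  have hRHSgoal : ∑ x : Fin d, ∑ y : Fin d,
        pexp d (fun η => (f ((Equiv.swap x y).trans η) - f η)^2)
      = QQ d f / (Nat.factorial d : ℝ) := by
    unfold pexp QQ
    rw [Finset.sum_div]
    refine Finset.sum_congr rfl fun x _ => ?_
    rw [Finset.sum_div]
    refine Finset.sum_congr rfl fun y _ => ?_
    rfl
  rw [hLHSgoal, hRHSgoal]
  rw [div_le_iff₀ hfacpos]
  have hr : (1/(4*(d:ℝ))) * (QQ d f / (Nat.factorial d:ℝ)) * (Nat.factorial d:ℝ)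
      = QQ d f / (4*(d:ℝ)) := by
    field_simp
  rw [hr, le_div_iff₀ (by linarith : (0:ℝ) < 4*(d:ℝ))]
  linarith [hgap]
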